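/- The number q_t of labeled directed acyclic graphs on t vertices satisfies the recurrence q_t = Σ_{k=1}^{t} (-1)^{k-1} · C(t,k) · 2^{k(t-k)} · q_{t-k}, with q_0 = 1. -/

import Mathlib

/-- A labeled directed graph on vertex set `Fin t` is acyclic if it has no directed
cycle, i.e. no vertex reaches itself by a nonempty directed walk. -/
def IsAcyclicRel {t : ℕ} (r : Fin t → Fin t → Bool) : Prop :=
  ∀ x : Fin t, ¬ Relation.TransGen (fun a b => r a b = true) x x

/-- The number of labeled directed acyclic graphs on `t` vertices. -/
noncomputable def numDAGs (t : ℕ) : ℕ :=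
  Nat.card {r : Fin t → Fin t → Bool // IsAcyclicRel r}

open Finset

/-- Acyclicity for a Bool-valued relation on an arbitrary type. -/
def Acy {α : Type*} (r : α → α → Bool) : Prop :=
  ∀ x, ¬ Relation.TransGen (fun a b => r a b = true) x x

/-- Transport of acyclic relations along an equivalence. -/
def acyEquiv {α β : Type*} (e : α ≃ β) :
    {r : α → α → Bool // Acy r} ≃ {r : β → β → Bool // Acy r} where
  toFun r := ⟨fun a b => r.1 (e.symm a) (e.symm b), fun x hx =>
    r.2 (e.symm x) (Relation.TransGen.lift e.symm (fun _ _ h => h) _ _ hx)⟩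
  invFun r := ⟨fun a b => r.1 (e a) (e b), fun x hx =>
    r.2 (e x) (Relation.TransGen.lift e (fun _ _ h => h) _ _ hx)⟩
  left_inv r := Subtype.ext (by funext a b; simp)
  right_inv r := Subtype.ext (by funext a b; simp)

lemma exists_source {α : Type*} [Fintype α] [Nonempty α] {r : α → α → Bool} (h : Acy r) :
    ∃ b, ∀ a, r a b = false := by
  haveI : IsIrrefl α (Relation.TransGen (fun a b => r a b = true)) := ⟨h⟩
  have hwf : WellFounded (Relation.TransGen (fun a b : α => r a b = true)) :=
    Finite.wellFounded_of_trans_of_irrefl _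
  have hwf' : WellFounded (fun a b : α => r a b = true) :=
    Subrelation.wf (r := Relation.TransGen (fun a b : α => r a b = true))
      (fun hab => Relation.TransGen.single hab) hwf
  obtain ⟨b, -, hb⟩ := hwf'.has_min Set.univ ⟨Classical.arbitrary α, trivial⟩
  exact ⟨b, fun a => Bool.eq_false_iff.mpr (hb a trivial)⟩

lemma transGen_restrict {α : Type*} (S : Finset α) (r : α → α → Bool)
    (hr : ∀ a b, r a b = true → b ∉ S) {x y : α} (hy : y ∉ S)
    (h : Relation.TransGen (fun a b => r a b = true) x y) :
    ∀ hx : x ∉ S,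
      Relation.TransGen (fun a b : {v : α // v ∉ S} => r a b = true) ⟨x, hx⟩ ⟨y, hy⟩ := by
  induction h using Relation.TransGen.head_induction_on with
  | single hab => intro hx; exact Relation.TransGen.single hab
  | head hab htg ihh => intro hx; exact (ihh (hr _ _ hab)).head hab

section Split

variable {t : ℕ}

/-- Splitting a DAG whose `S`-vertices are all sources. -/
noncomputable def splitEquiv (S : Finset (Fin t)) :
    {r : Fin t → Fin t → Bool // Acy r ∧ ∀ b ∈ S, ∀ a, r a b = false} ≃
      (({v : Fin t // v ∈ S} → {v : Fin t // v ∉ S} → Bool) ×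
        {d : {v : Fin t // v ∉ S} → {v : Fin t // v ∉ S} → Bool // Acy d}) where
  toFun r := ⟨fun a b => r.1 a b, ⟨fun a b => r.1 a b, fun x hx =>
    r.2.1 x (Relation.TransGen.lift Subtype.val (fun _ _ h => h) _ _ hx)⟩⟩
  invFun fd := by
    classical
    refine ⟨fun a b => if hb : b ∈ S then false else
      if ha : a ∈ S then fd.1 ⟨a, ha⟩ ⟨b, hb⟩ else fd.2.1 ⟨a, ha⟩ ⟨b, hb⟩, ?_, ?_⟩
    · set r : Fin t → Fin t → Bool := fun a b => if hb : b ∈ S then false else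
        if ha : a ∈ S then fd.1 ⟨a, ha⟩ ⟨b, hb⟩ else fd.2.1 ⟨a, ha⟩ ⟨b, hb⟩ with hrdef
      have hr : ∀ a b, r a b = true → b ∉ S := by
        intro a b h hb
        rw [hrdef] at h
        simp only [dif_pos hb] at h
        exact Bool.false_ne_true h
      intro x hx
      have hxS : x ∉ S := by
        rcases (Relation.transGen_iff _ _ _).mp hx with h | ⟨c, _, hcx⟩
        · exact hr _ _ h
        · exact hr _ _ hcx
      have h2 := transGen_restrict S r hr hxS hx hxS
      have h3 : Relation.TransGen
          (fun a b : {v : Fin t // v ∉ S} => fd.2.1 a b = true) ⟨x, hxS⟩ ⟨x, hxS⟩ := by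
        refine Relation.TransGen.mono ?_ _ _ h2
        rintro ⟨a, ha⟩ ⟨b, hb⟩ h
        rw [hrdef] at h
        simpa only [dif_neg hb, dif_neg ha] using h
      exact fd.2.2 _ h3
    · intro b hb a
      simp [dif_pos hb]
  left_inv r := by
    apply Subtype.ext
    funext a b
    by_cases hb : b ∈ S
    · simp [dif_pos hb, (r.2.2 b hb a).symm]
    · by_cases ha : a ∈ S <;> simp [dif_neg hb, ha]
  right_inv fd := by
    refine Prod.ext ?_ (Subtype.ext ?_)
    · funext a b
      simp [a.2, b.2]
    · funext a b
      simp [a.2, b.2]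

end Split

lemma cardB {t : ℕ} (S : Finset (Fin t)) :
    Nat.card {r : Fin t → Fin t → Bool // Acy r ∧ ∀ b ∈ S, ∀ a, r a b = false}
      = 2 ^ (S.card * (t - S.card)) *
        Nat.card {r : Fin (t - S.card) → Fin (t - S.card) → Bool // Acy r} := by
  classical
  have hC : Fintype.card {v : Fin t // v ∉ S} = t - S.card := by
    rw [Fintype.card_subtype_compl]
    simp [Fintype.card_coe]
  rw [Nat.card_congr (splitEquiv S), Nat.card_prod]
  congr 1
  · rw [Nat.card_eq_fintype_card, Fintype.card_fun, Fintype.card_fun, Fintype.card_bool,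
      hC]
    have : Fintype.card {v : Fin t // v ∈ S} = S.card := by
      simp [Fintype.card_coe]
    rw [this, ← pow_mul, Nat.mul_comm]
  · rw [Nat.card_congr (acyEquiv (Fintype.equivFinOfCardEq hC))]

lemma numDAGs_eq_acy (n : ℕ) :
    numDAGs n = Nat.card {r : Fin n → Fin n → Bool // Acy r} := rfl

/-- The number `q_t` of labeled DAGs on `t` vertices satisfies `q_0 = 1` and the
recurrence `q_t = ∑_{k=1}^{t} (-1)^{k-1} C(t,k) 2^{k(t-k)} q_{t-k}`. -/
theorem numDAGs_recurrence :
    numDAGs 0 = 1 ∧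
    ∀ t : ℕ, 1 ≤ t →
      (numDAGs t : ℤ) =
        ∑ k ∈ Finset.Icc 1 t,
          (-1) ^ (k - 1) * (t.choose k : ℤ) * 2 ^ (k * (t - k)) * (numDAGs (t - k) : ℤ) := by
  have h0 : numDAGs 0 = 1 := by
    haveI : Unique {r : Fin 0 → Fin 0 → Bool // IsAcyclicRel r} :=
      { default := ⟨fun x => x.elim0, fun x => x.elim0⟩
        uniq := fun r => Subtype.ext (funext fun x => x.elim0) }
    exact Nat.card_unique
  refine ⟨h0, fun t ht => ?_⟩
  classical
  haveI : Nonempty (Fin t) := ⟨⟨0, ht⟩⟩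
  set E : Finset (Finset (Fin t)) := univ.powerset.erase ∅ with hE
  set src : (Fin t → Fin t → Bool) → Finset (Fin t) :=
    fun r => univ.filter (fun b => ∀ a, r a b = false) with hsrc
  set D : Finset (Fin t → Fin t → Bool) := univ.filter (fun r => Acy r) with hD
  have hcard : numDAGs t = D.card := by
    rw [numDAGs_eq_acy, Nat.card_eq_fintype_card, hD, Fintype.card_subtype]
  -- the counting lemma for each subset S
  have hsub : ∀ S : Finset (Fin t), ((D.filter (fun r => S ⊆ src r)).card : ℤ)
      = 2 ^ (S.card * (t - S.card)) * (numDAGs (t - S.card) : ℤ) := by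
    intro S
    have hfe : D.filter (fun r => S ⊆ src r)
        = univ.filter (fun r => Acy r ∧ S ⊆ src r) := by
      rw [hD, filter_filter]
    have hiff : ∀ r : Fin t → Fin t → Bool,
        (Acy r ∧ S ⊆ src r) ↔ (Acy r ∧ ∀ b ∈ S, ∀ a, r a b = false) := by
      intro r
      simp [hsrc, Finset.subset_iff]
    have : (D.filter (fun r => S ⊆ src r)).card
        = Nat.card {r : Fin t → Fin t → Bool // Acy r ∧ ∀ b ∈ S, ∀ a, r a b = false} := by
      rw [hfe, ← Fintype.card_subtype, ← Nat.card_eq_fintype_card]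
      exact Nat.card_congr (Equiv.subtypeEquivRight hiff)
    rw [this, cardB S, ← numDAGs_eq_acy]
    push_cast
    ring
  -- inclusion-exclusion
  have key : (D.card : ℤ)
      = ∑ S ∈ E, (-1 : ℤ) ^ (S.card + 1) * ((D.filter (fun r => S ⊆ src r)).card : ℤ) := by
    calc (D.card : ℤ) = ∑ _r ∈ D, (1 : ℤ) := by simp
      _ = ∑ r ∈ D, ∑ S ∈ E, (if S ⊆ src r then (-1 : ℤ) ^ (S.card + 1) else 0) := by
          refine Finset.sum_congr rfl fun r hr => ?_
          have hacy : Acy r := by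
            rw [hD, mem_filter] at hr; exact hr.2
          have hne : (src r).Nonempty := by
            obtain ⟨b, hb⟩ := exists_source hacy
            exact ⟨b, by simp [hsrc, hb]⟩
          have hfilter : E.filter (fun S => S ⊆ src r) = (src r).powerset.erase ∅ := by
            ext S
            simp only [hE, mem_filter, mem_erase, mem_powerset]
            constructor
            · rintro ⟨⟨h1, _⟩, h3⟩; exact ⟨h1, h3⟩
            · rintro ⟨h1, h2⟩; exact ⟨⟨h1, subset_univ S⟩, h2⟩
          rw [← Finset.sum_filter, hfilter]
          have h1 : ∑ S ∈ (src r).powerset, (-1 : ℤ) ^ S.card = 0 :=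
            Finset.sum_powerset_neg_one_pow_card_of_nonempty hne
          have h2 := Finset.add_sum_erase ((src r).powerset)
            (fun S => (-1 : ℤ) ^ S.card) (Finset.empty_mem_powerset (src r))
          simp only [card_empty, pow_zero] at h2
          have h3 : ∑ S ∈ (src r).powerset.erase ∅, (-1 : ℤ) ^ S.card = -1 := by
            rw [h1] at h2; linarith
          have h4 : ∑ S ∈ (src r).powerset.erase ∅, (-1 : ℤ) ^ (S.card + 1)
              = (∑ S ∈ (src r).powerset.erase ∅, (-1 : ℤ) ^ S.card) * (-1) := by
            rw [Finset.sum_mul]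
            exact Finset.sum_congr rfl fun S _ => by ring
          rw [h4, h3]; ring
      _ = ∑ S ∈ E, ∑ r ∈ D, (if S ⊆ src r then (-1 : ℤ) ^ (S.card + 1) else 0) :=
          Finset.sum_comm
      _ = ∑ S ∈ E, (-1 : ℤ) ^ (S.card + 1) * ((D.filter (fun r => S ⊆ src r)).card : ℤ) := by
          refine Finset.sum_congr rfl fun S _ => ?_
          rw [← Finset.sum_filter, Finset.sum_const, nsmul_eq_mul, mul_comm]
  -- group by cardinality
  set g : ℕ → ℤ := fun k => (-1 : ℤ) ^ (k + 1) * (2 ^ (k * (t - k)) * (numDAGs (t - k) : ℤ))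
    with hg
  have keyg : (numDAGs t : ℤ) = ∑ S ∈ E, g S.card := by
    rw [hcard, key]
    refine Finset.sum_congr rfl fun S _ => ?_
    rw [hsub S, hg]
  have hps : ∑ S ∈ (univ : Finset (Fin t)).powerset, g S.card
      = ∑ k ∈ Finset.range (t + 1), (t.choose k) • g k := by
    rw [Finset.sum_powerset_apply_card]
    simp
  have hsplit : ∑ S ∈ (univ : Finset (Fin t)).powerset, g S.card
      = g 0 + ∑ S ∈ E, g S.card := by
    rw [hE, ← Finset.add_sum_erase _ _ (Finset.empty_mem_powerset univ)]
    simp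
  have hrange : ∑ k ∈ Finset.range (t + 1), (t.choose k) • g k
      = g 0 + ∑ k ∈ Finset.Icc 1 t, (t.choose k) • g k := by
    have hIcc : Finset.range (t + 1) = insert 0 (Finset.Icc 1 t) := by
      ext k
      simp only [Finset.mem_range, Finset.mem_insert, Finset.mem_Icc]
      omega
    rw [hIcc, Finset.sum_insert (by simp)]
    simp
  have hEsum : ∑ S ∈ E, g S.card = ∑ k ∈ Finset.Icc 1 t, (t.choose k) • g k := by
    have := hsplit.symm.trans (hps.trans hrange)
    linarith
  rw [keyg, hEsum]
  refine Finset.sum_congr rfl fun k hk => ?_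
  have hk1 : 1 ≤ k := (Finset.mem_Icc.mp hk).1
  obtain ⟨m, rfl⟩ : ∃ m, k = m + 1 := ⟨k - 1, (Nat.succ_pred_eq_of_pos hk1).symm⟩
  rw [hg, nsmul_eq_mul]
  simp only [Nat.add_sub_cancel]
  ring
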